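/- Let T0 and T1 be the Goursat matrices with parameters a1, a2, b, A, B, C, D ∈ ℂ, and assume a1 ∉ {0, 1}, a2 ∉ {0, 1}, a1 ≠ a2, and b ∉ {0, 1}. Then the pair (T0, T1) is irreducible (the only subspaces of ℂ⁴ invariant under both T0 and T1 are 0 and ℂ⁴) if and only if B·C·(AD − BC)·(AD − BC − A − D + 1) ≠ 0. -/

import Mathlib

open Matrix

/-- Goursat's matrix `T0` with parameters `a1, a2, b, A, B, C, D`. -/
noncomputable def goursatT0 (a1 a2 A B C D : ℂ) : Matrix (Fin 4) (Fin 4) ℂ :=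
  !![1, 0, A * (1 - a1), B * (1 - a2);
     0, 1, C * (1 - a1), D * (1 - a2);
     0, 0, a1, 0;
     0, 0, 0, a2]

/-- Goursat's matrix `T1` with parameter `b`. -/
noncomputable def goursatT1 (b : ℂ) : Matrix (Fin 4) (Fin 4) ℂ :=
  !![b, 0, 0, 0;
     0, b, 0, 0;
     1 - b, 0, 1, 0;
     0, 1 - b, 0, 1]

noncomputable def funKer (c0 c1 c2 c3 : ℂ) : Submodule ℂ (Fin 4 → ℂ) where
  carrier := {v | c0 * v 0 + c1 * v 1 + c2 * v 2 + c3 * v 3 = 0}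
  add_mem' := by
    intro a b ha hb
    simp only [Set.mem_setOf_eq, Pi.add_apply] at *
    linear_combination ha + hb
  zero_mem' := by simp
  smul_mem' := by
    intro c a ha
    simp only [Set.mem_setOf_eq, Pi.smul_apply, smul_eq_mul] at *
    linear_combination c * ha

lemma funKer_mem (c0 c1 c2 c3 : ℂ) (v : Fin 4 → ℂ) :
    v ∈ funKer c0 c1 c2 c3 ↔ c0 * v 0 + c1 * v 1 + c2 * v 2 + c3 * v 3 = 0 := Iff.rfl

noncomputable def pairKer13 : Submodule ℂ (Fin 4 → ℂ) where
  carrier := {v | v 1 = 0 ∧ v 3 = 0}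
  add_mem' := by rintro a b ⟨h1, h2⟩ ⟨h3, h4⟩; exact ⟨by simp [h1, h3], by simp [h2, h4]⟩
  zero_mem' := ⟨rfl, rfl⟩
  smul_mem' := by rintro c a ⟨h1, h2⟩; exact ⟨by simp [h1], by simp [h2]⟩

noncomputable def pairKer02 : Submodule ℂ (Fin 4 → ℂ) where
  carrier := {v | v 0 = 0 ∧ v 2 = 0}
  add_mem' := by rintro a b ⟨h1, h2⟩ ⟨h3, h4⟩; exact ⟨by simp [h1, h3], by simp [h2, h4]⟩
  zero_mem' := ⟨rfl, rfl⟩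
  smul_mem' := by rintro c a ⟨h1, h2⟩; exact ⟨by simp [h1], by simp [h2]⟩

lemma pairKer13_mem (v : Fin 4 → ℂ) : v ∈ pairKer13 ↔ v 1 = 0 ∧ v 3 = 0 := Iff.rfl
lemma pairKer02_mem (v : Fin 4 → ℂ) : v ∈ pairKer02 ↔ v 0 = 0 ∧ v 2 = 0 := Iff.rfl

lemma gT0_apply (a1 a2 A B C D : ℂ) (v : Fin 4 → ℂ) :
    (goursatT0 a1 a2 A B C D).mulVec v =
    ![v 0 + A * (1 - a1) * v 2 + B * (1 - a2) * v 3,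
      v 1 + C * (1 - a1) * v 2 + D * (1 - a2) * v 3,
      a1 * v 2, a2 * v 3] := by
  funext i
  fin_cases i <;> simp [goursatT0, mulVec, dotProduct, Fin.sum_univ_four]

lemma gT1_apply (b : ℂ) (v : Fin 4 → ℂ) :
    (goursatT1 b).mulVec v =
    ![b * v 0, b * v 1, (1 - b) * v 0 + v 2, (1 - b) * v 1 + v 3] := by
  funext i
  fin_cases i <;> simp [goursatT1, mulVec, dotProduct, Fin.sum_univ_four]


lemma finsucc0 : (Fin.succ 0 : Fin 4) = 1 := by decide
lemma finsucc1 : (Fin.succ 1 : Fin 4) = 2 := by decide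
lemma finsucc2 : (Fin.succ 2 : Fin 4) = 3 := by decide

lemma mem_congr {V : Submodule ℂ (Fin 4 → ℂ)} {x y : Fin 4 → ℂ} (h : x ∈ V) (e : y = x) :
    y ∈ V := e ▸ h

section proj
variable {a1 a2 b A B C D : ℂ} {V : Submodule ℂ (Fin 4 → ℂ)}

/-- projection onto the 1-eigenspace of T1 -/
lemma projE1 (hb' : b ≠ 1)
    (hT1 : ∀ v ∈ V, (goursatT1 b).mulVec v ∈ V) (v : Fin 4 → ℂ) (hv : v ∈ V) :
    (![0, 0, v 0 + v 2, v 1 + v 3] : Fin 4 → ℂ) ∈ V := by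
  have hb1 : (1 : ℂ) - b ≠ 0 := sub_ne_zero.2 (Ne.symm hb')
  refine mem_congr (V.smul_mem ((1 - b)⁻¹) (V.sub_mem (hT1 v hv) (V.smul_mem b hv))) ?_
  funext i
  fin_cases i <;> simp [gT1_apply, Matrix.vecHead, Matrix.vecTail, Pi.smul_apply, smul_eq_mul, finsucc0, finsucc1, finsucc2] <;> field_simp <;> ring

/-- extract the a1-eigencomponent with T0 -/
lemma projA1 (ha1' : a1 ≠ 1) (ha : a1 ≠ a2)
    (hT0 : ∀ v ∈ V, (goursatT0 a1 a2 A B C D).mulVec v ∈ V) (v : Fin 4 → ℂ) (hv : v ∈ V) :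
    (![-(A * v 2), -(C * v 2), v 2, 0] : Fin 4 → ℂ) ∈ V := by
  have h1 : a1 - 1 ≠ 0 := sub_ne_zero.2 ha1'
  have h2 : a1 - a2 ≠ 0 := sub_ne_zero.2 ha
  have hw : (goursatT0 a1 a2 A B C D).mulVec v - a2 • v ∈ V :=
    V.sub_mem (hT0 v hv) (V.smul_mem a2 hv)
  have hw2 : (goursatT0 a1 a2 A B C D).mulVec ((goursatT0 a1 a2 A B C D).mulVec v - a2 • v)
      - ((goursatT0 a1 a2 A B C D).mulVec v - a2 • v) ∈ V := V.sub_mem (hT0 _ hw) hw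
  refine mem_congr (V.smul_mem (((a1 - 1) * (a1 - a2))⁻¹) hw2) ?_
  funext i
  fin_cases i <;> simp [gT0_apply, Matrix.vecHead, Matrix.vecTail, Pi.smul_apply, smul_eq_mul, finsucc0, finsucc1, finsucc2] <;> field_simp <;> ring

/-- extract the a2-eigencomponent with T0 -/
lemma projA2 (ha2' : a2 ≠ 1) (ha : a1 ≠ a2)
    (hT0 : ∀ v ∈ V, (goursatT0 a1 a2 A B C D).mulVec v ∈ V) (v : Fin 4 → ℂ) (hv : v ∈ V) :
    (![-(B * v 3), -(D * v 3), 0, v 3] : Fin 4 → ℂ) ∈ V := by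
  have h1 : a2 - 1 ≠ 0 := sub_ne_zero.2 ha2'
  have h2 : a2 - a1 ≠ 0 := sub_ne_zero.2 (Ne.symm ha)
  have hw : (goursatT0 a1 a2 A B C D).mulVec v - a1 • v ∈ V :=
    V.sub_mem (hT0 v hv) (V.smul_mem a1 hv)
  have hw2 : (goursatT0 a1 a2 A B C D).mulVec ((goursatT0 a1 a2 A B C D).mulVec v - a1 • v)
      - ((goursatT0 a1 a2 A B C D).mulVec v - a1 • v) ∈ V := V.sub_mem (hT0 _ hw) hw
  refine mem_congr (V.smul_mem (((a2 - 1) * (a2 - a1))⁻¹) hw2) ?_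
  funext i
  fin_cases i <;> simp [gT0_apply, Matrix.vecHead, Matrix.vecTail, Pi.smul_apply, smul_eq_mul, finsucc0, finsucc1, finsucc2] <;> field_simp <;> ring

end proj

section main
variable {a1 a2 b A B C D : ℂ} {V : Submodule ℂ (Fin 4 → ℂ)}

lemma fromOmega1 (ha1' : a1 ≠ 1) (ha2' : a2 ≠ 1) (ha : a1 ≠ a2) (hb' : b ≠ 1)
    (hT0 : ∀ v ∈ V, (goursatT0 a1 a2 A B C D).mulVec v ∈ V)
    (hT1 : ∀ v ∈ V, (goursatT1 b).mulVec v ∈ V)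
    (hB : B ≠ 0) (hC : C ≠ 0) (hd1 : A * D - B * C ≠ 0)
    (hd2 : A * D - B * C - A - D + 1 ≠ 0)
    (hω1 : (![-A, -C, 1, 0] : Fin 4 → ℂ) ∈ V) : V = ⊤ := by
  -- z1 = E1-part of ω1
  have hz1 : (![0, 0, 1 - A, -C] : Fin 4 → ℂ) ∈ V := by
    refine mem_congr (projE1 hb' hT1 _ hω1) ?_
    funext i; fin_cases i <;> simp <;> ring
  -- ω2 ∈ V from the a2-component of z1
  have hω2 : (![-B, -D, 0, 1] : Fin 4 → ℂ) ∈ V := by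
    have h := projA2 ha2' ha hT0 _ hz1
    refine mem_congr (V.smul_mem (-C)⁻¹ h) ?_
    have hC' : -C ≠ 0 := neg_ne_zero.2 hC
    funext i; fin_cases i <;> simp <;> field_simp <;> ring
  have hz2 : (![0, 0, -B, 1 - D] : Fin 4 → ℂ) ∈ V := by
    refine mem_congr (projE1 hb' hT1 _ hω2) ?_
    funext i; fin_cases i <;> simp <;> ring
  -- e3 and e4
  have he3 : (![0, 0, 1, 0] : Fin 4 → ℂ) ∈ V := by
    refine mem_congr (V.add_mem
      (V.smul_mem ((1 - D) / (A * D - B * C - A - D + 1)) hz1)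
      (V.smul_mem (C / (A * D - B * C - A - D + 1)) hz2)) ?_
    have hd2' : 1 - D + D * A - A - B * C ≠ 0 := by
      intro h; exact hd2 (by linear_combination h)
    funext i; fin_cases i <;> simp <;> field_simp <;> ring_nf <;> linear_combination (-1 : ℂ) * mul_inv_cancel₀ hd2'
  have he4 : (![0, 0, 0, 1] : Fin 4 → ℂ) ∈ V := by
    refine mem_congr (V.add_mem
      (V.smul_mem (B / (A * D - B * C - A - D + 1)) hz1)
      (V.smul_mem ((1 - A) / (A * D - B * C - A - D + 1)) hz2)) ?_
    funext i; fin_cases i <;> simp <;> field_simp <;> ring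
  -- y1 = (A, C, 0, 0), y2 = (B, D, 0, 0)
  have ha1n : (1 : ℂ) - a1 ≠ 0 := sub_ne_zero.2 (Ne.symm ha1')
  have ha2n : (1 : ℂ) - a2 ≠ 0 := sub_ne_zero.2 (Ne.symm ha2')
  have hy1 : (![A, C, 0, 0] : Fin 4 → ℂ) ∈ V := by
    have h := V.sub_mem (hT0 _ he3) (V.smul_mem a1 he3)
    refine mem_congr (V.smul_mem (1 - a1)⁻¹ h) ?_
    funext i; fin_cases i <;>
      simp [gT0_apply, Matrix.vecHead, Matrix.vecTail, Pi.smul_apply, smul_eq_mul,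
        finsucc0, finsucc1, finsucc2] <;> field_simp <;> ring
  have hy2 : (![B, D, 0, 0] : Fin 4 → ℂ) ∈ V := by
    have h := V.sub_mem (hT0 _ he4) (V.smul_mem a2 he4)
    refine mem_congr (V.smul_mem (1 - a2)⁻¹ h) ?_
    funext i; fin_cases i <;>
      simp [gT0_apply, Matrix.vecHead, Matrix.vecTail, Pi.smul_apply, smul_eq_mul,
        finsucc0, finsucc1, finsucc2] <;> field_simp <;> ring
  -- e1, e2
  have he1 : (![1, 0, 0, 0] : Fin 4 → ℂ) ∈ V := by
    refine mem_congr (V.add_mem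
      (V.smul_mem (D / (A * D - B * C)) hy1)
      (V.smul_mem (-C / (A * D - B * C)) hy2)) ?_
    have hd1' : D * A - B * C ≠ 0 := by
      intro h; exact hd1 (by linear_combination h)
    funext i; fin_cases i <;> simp <;> field_simp <;> ring
  have he2 : (![0, 1, 0, 0] : Fin 4 → ℂ) ∈ V := by
    refine mem_congr (V.add_mem
      (V.smul_mem (-B / (A * D - B * C)) hy1)
      (V.smul_mem (A / (A * D - B * C)) hy2)) ?_
    funext i; fin_cases i <;> simp <;> field_simp <;> ring
  rw [Submodule.eq_top_iff']
  intro x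
  have hx : x = x 0 • ![1,0,0,0] + x 1 • ![0,1,0,0] + x 2 • ![0,0,1,0] + x 3 • ![0,0,0,1] := by
    funext i; fin_cases i <;> simp
  rw [hx]
  exact V.add_mem (V.add_mem (V.add_mem (V.smul_mem _ he1) (V.smul_mem _ he2))
    (V.smul_mem _ he3)) (V.smul_mem _ he4)

lemma fromOmega2 (ha1' : a1 ≠ 1) (ha2' : a2 ≠ 1) (ha : a1 ≠ a2) (hb' : b ≠ 1)
    (hT0 : ∀ v ∈ V, (goursatT0 a1 a2 A B C D).mulVec v ∈ V)
    (hT1 : ∀ v ∈ V, (goursatT1 b).mulVec v ∈ V)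
    (hB : B ≠ 0) (hC : C ≠ 0) (hd1 : A * D - B * C ≠ 0)
    (hd2 : A * D - B * C - A - D + 1 ≠ 0)
    (hω2 : (![-B, -D, 0, 1] : Fin 4 → ℂ) ∈ V) : V = ⊤ := by
  have hz2 : (![0, 0, -B, 1 - D] : Fin 4 → ℂ) ∈ V := by
    refine mem_congr (projE1 hb' hT1 _ hω2) ?_
    funext i; fin_cases i <;> simp <;> ring
  have hω1 : (![-A, -C, 1, 0] : Fin 4 → ℂ) ∈ V := by
    have h := projA1 ha1' ha hT0 _ hz2
    refine mem_congr (V.smul_mem (-B)⁻¹ h) ?_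
    have hB' : -B ≠ 0 := neg_ne_zero.2 hB
    funext i; fin_cases i <;> simp <;> field_simp <;> ring
  exact fromOmega1 ha1' ha2' ha hb' hT0 hT1 hB hC hd1 hd2 hω1

end main

/-- Irreducibility criterion for the pair of Goursat matrices `(T0, T1)`:
assuming the genericity conditions on `a1, a2, b`, the pair is irreducible iff
`B·C·(AD − BC)·(AD − BC − A − D + 1) ≠ 0`. -/
theorem stmt_7 (a1 a2 b A B C D : ℂ)
    (ha1 : a1 ≠ 0) (ha1' : a1 ≠ 1) (ha2 : a2 ≠ 0) (ha2' : a2 ≠ 1)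
    (ha : a1 ≠ a2) (hb : b ≠ 0) (hb' : b ≠ 1) :
    (∀ V : Submodule ℂ (Fin 4 → ℂ),
        (∀ v ∈ V, (goursatT0 a1 a2 A B C D).mulVec v ∈ V) →
        (∀ v ∈ V, (goursatT1 b).mulVec v ∈ V) →
        V = ⊥ ∨ V = ⊤) ↔
      B * C * (A * D - B * C) * (A * D - B * C - A - D + 1) ≠ 0 := by
  constructor
  · intro h
    intro hp
    by_cases hB : B = 0
    · rcases h pairKer02
        (by
          intro v hv
          rw [pairKer02_mem] at hv ⊢
          rw [gT0_apply]
          refine ⟨?_, ?_⟩ <;> simp [hv.1, hv.2, hB])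
        (by
          intro v hv
          rw [pairKer02_mem] at hv ⊢
          rw [gT1_apply]
          refine ⟨?_, ?_⟩ <;> simp [hv.1, hv.2]) with h' | h'
      · have h2 : (![0,1,0,0] : Fin 4 → ℂ) ∈ pairKer02 := ⟨by simp, by simp⟩
        rw [h', Submodule.mem_bot] at h2
        have := congrFun h2 1
        simp at this
      · have h2 : (![1,0,0,0] : Fin 4 → ℂ) ∈ pairKer02 := h' ▸ Submodule.mem_top
        have := h2.1
        simp at this
    by_cases hC : C = 0
    · rcases h pairKer13
        (by
          intro v hv
          rw [pairKer13_mem] at hv ⊢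
          rw [gT0_apply]
          refine ⟨?_, ?_⟩ <;> simp [hv.1, hv.2, hC])
        (by
          intro v hv
          rw [pairKer13_mem] at hv ⊢
          rw [gT1_apply]
          refine ⟨?_, ?_⟩ <;> simp [hv.1, hv.2]) with h' | h'
      · have h2 : (![1,0,0,0] : Fin 4 → ℂ) ∈ pairKer13 := ⟨by simp, by simp⟩
        rw [h', Submodule.mem_bot] at h2
        have := congrFun h2 0
        simp at this
      · have h2 : (![0,1,0,0] : Fin 4 → ℂ) ∈ pairKer13 := h' ▸ Submodule.mem_top
        have := h2.1
        simp at this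
    -- now B ≠ 0, C ≠ 0
    have hp2 : (A * D - B * C) * (A * D - B * C - A - D + 1) = 0 := by
      rcases mul_eq_zero.1 hp with h' | h'
      · rcases mul_eq_zero.1 h' with h'' | h''
        · rcases mul_eq_zero.1 h'' with h3 | h3
          exacts [(hB h3).elim, (hC h3).elim]
        · rw [h'']; ring
      · rw [h']; ring
    rcases mul_eq_zero.1 hp2 with hd | hd
    · -- A*D - B*C = 0, use funKer D (-B) 0 0
      rcases h (funKer D (-B) 0 0)
        (by
          intro v hv
          rw [funKer_mem] at hv ⊢
          rw [gT0_apply]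
          simp only [Matrix.cons_val_zero, Matrix.cons_val_one, Matrix.head_cons,
            Matrix.cons_val_two, Matrix.tail_cons, Matrix.cons_val_three]
          linear_combination hv + (1 - a1) * v 2 * hd)
        (by
          intro v hv
          rw [funKer_mem] at hv ⊢
          rw [gT1_apply]
          simp only [Matrix.cons_val_zero, Matrix.cons_val_one, Matrix.head_cons,
            Matrix.cons_val_two, Matrix.tail_cons, Matrix.cons_val_three]
          linear_combination b * hv) with h' | h'
      · have h2 : (![0,0,1,0] : Fin 4 → ℂ) ∈ funKer D (-B) 0 0 := by
          rw [funKer_mem]; simp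
        rw [h', Submodule.mem_bot] at h2
        have := congrFun h2 2
        simp at this
      · have h2 : (![0,1,0,0] : Fin 4 → ℂ) ∈ funKer D (-B) 0 0 := h' ▸ Submodule.mem_top
        rw [funKer_mem] at h2
        simp at h2
        exact hB h2
    · -- A*D - B*C - A - D + 1 = 0, use funKer C (1-A) C (1-A)
      rcases h (funKer C (1-A) C (1-A))
        (by
          intro v hv
          rw [funKer_mem] at hv ⊢
          rw [gT0_apply]
          simp only [Matrix.cons_val_zero, Matrix.cons_val_one, Matrix.head_cons,
            Matrix.cons_val_two, Matrix.tail_cons, Matrix.cons_val_three]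
          linear_combination hv - (1 - a2) * v 3 * hd)
        (by
          intro v hv
          rw [funKer_mem] at hv ⊢
          rw [gT1_apply]
          simp only [Matrix.cons_val_zero, Matrix.cons_val_one, Matrix.head_cons,
            Matrix.cons_val_two, Matrix.tail_cons, Matrix.cons_val_three]
          linear_combination b * hv + (1 - b) * hv) with h' | h'
      · have h2 : (![1,0,-1,0] : Fin 4 → ℂ) ∈ funKer C (1-A) C (1-A) := by
          rw [funKer_mem]; simp
        rw [h', Submodule.mem_bot] at h2
        have := congrFun h2 0
        simp at this
      · have h2 : (![1,0,0,0] : Fin 4 → ℂ) ∈ funKer C (1-A) C (1-A) := h' ▸ Submodule.mem_top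
        rw [funKer_mem] at h2
        simp at h2
        exact hC h2
  · intro hp
    have hB : B ≠ 0 := fun h => hp (by rw [h]; ring)
    have hC : C ≠ 0 := fun h => hp (by rw [h]; ring)
    have hd1 : A * D - B * C ≠ 0 := fun h => hp (by rw [mul_assoc, mul_assoc, h]; ring)
    have hd2 : A * D - B * C - A - D + 1 ≠ 0 := fun h => hp (by rw [h]; ring)
    intro V hT0 hT1
    by_cases hbot : V = ⊥
    · exact Or.inl hbot
    right
    obtain ⟨v, hv, hv0⟩ := (Submodule.ne_bot_iff V).1 hbot
    by_cases h2 : v 2 = 0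
    · by_cases h3 : v 3 = 0
      · -- v lies in span(e1,e2)
        have hu := projE1 hb' hT1 v hv
        by_cases h0 : v 0 = 0
        · have h1 : v 1 ≠ 0 := by
            intro h1
            apply hv0
            funext i
            fin_cases i
            exacts [h0, h1, h2, h3]
          have k2 := projA2 ha2' ha hT0 _ hu
          have hω2 : (![-B, -D, 0, 1] : Fin 4 → ℂ) ∈ V := by
            refine mem_congr (V.smul_mem (v 1)⁻¹ k2) ?_
            funext i; fin_cases i <;> simp [h3] <;> field_simp <;> ring
          exact fromOmega2 ha1' ha2' ha hb' hT0 hT1 hB hC hd1 hd2 hω2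
        · have k1 := projA1 ha1' ha hT0 _ hu
          have hω1 : (![-A, -C, 1, 0] : Fin 4 → ℂ) ∈ V := by
            refine mem_congr (V.smul_mem (v 0)⁻¹ k1) ?_
            funext i; fin_cases i <;> simp [h2] <;> field_simp <;> ring
          exact fromOmega1 ha1' ha2' ha hb' hT0 hT1 hB hC hd1 hd2 hω1
      · have k2 := projA2 ha2' ha hT0 v hv
        have hω2 : (![-B, -D, 0, 1] : Fin 4 → ℂ) ∈ V := by
          refine mem_congr (V.smul_mem (v 3)⁻¹ k2) ?_
          funext i; fin_cases i <;> simp <;> field_simp <;> ring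
        exact fromOmega2 ha1' ha2' ha hb' hT0 hT1 hB hC hd1 hd2 hω2
    · have k1 := projA1 ha1' ha hT0 v hv
      have hω1 : (![-A, -C, 1, 0] : Fin 4 → ℂ) ∈ V := by
        refine mem_congr (V.smul_mem (v 2)⁻¹ k1) ?_
        funext i; fin_cases i <;> simp <;> field_simp <;> ring
      exact fromOmega1 ha1' ha2' ha hb' hT0 hT1 hB hC hd1 hd2 hω1
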